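/- There exists a universal constant C > 0 such that for every probability density p on ℝ with 0 < ‖p − φ‖_∞ ≤ 1/2, one has ‖p − φ‖_1 ≤ C·√(|ln ‖p − φ‖_∞|)·‖p − φ‖_∞, and consequently ‖p − φ‖_2² ≤ ‖p − φ‖_∞·‖p − φ‖_1 ≤ C·√(|ln ‖p − φ‖_∞|)·‖p − φ‖_∞². -/

import Mathlib

open MeasureTheory Real Filter
open scoped ENNReal
open Set

noncomputable section

/-- The standard Gaussian density on `ℝ`. -/
def gauss (x : ℝ) : ℝ := (Real.sqrt (2 * Real.pi))⁻¹ * Real.exp (-x ^ 2 / 2)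

lemma gauss_nonneg (x : ℝ) : 0 ≤ gauss x := by
  unfold gauss; positivity

lemma gauss_neg (x : ℝ) : gauss (-x) = gauss x := by
  simp [gauss, neg_pow]

lemma measurable_gauss : Measurable gauss := by
  unfold gauss; fun_prop

lemma integrable_gauss : Integrable gauss := by
  have h : Integrable (fun x : ℝ => Real.exp (-(1/2 : ℝ) * x ^ 2)) :=
    integrable_exp_neg_mul_sq (by norm_num)
  have : (fun x : ℝ => gauss x) =
      fun x => (Real.sqrt (2 * Real.pi))⁻¹ * Real.exp (-(1/2 : ℝ) * x ^ 2) := by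
    funext x; unfold gauss; ring_nf
  rw [show gauss = fun x => gauss x from rfl, this]
  exact h.const_mul _

lemma integral_gauss : ∫ x, gauss x = 1 := by
  have h : ∫ x : ℝ, Real.exp (-(1/2 : ℝ) * x ^ 2) = Real.sqrt (Real.pi / (1/2)) :=
    integral_gaussian (1/2)
  have heq : ∫ x, gauss x = (Real.sqrt (2 * Real.pi))⁻¹ * ∫ x : ℝ, Real.exp (-(1/2:ℝ) * x ^ 2) := by
    rw [← integral_const_mul]
    congr 1; funext x; unfold gauss; ring_nf
  rw [heq, h, show Real.pi / (1/2) = 2 * Real.pi by ring]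
  rw [inv_mul_cancel₀]
  positivity

lemma sqrt_two_pi_ge_one : (1:ℝ) ≤ Real.sqrt (2 * Real.pi) := by
  rw [show (1:ℝ) = Real.sqrt 1 by simp]
  apply Real.sqrt_le_sqrt
  nlinarith [Real.pi_gt_three]

lemma gauss_tail {T : ℝ} (hT : 1 ≤ T) :
    ∫ x in Ioi T, gauss x ≤ Real.exp (-T ^ 2 / 2) := by
  have hT0 : 0 < T := lt_of_lt_of_le one_pos hT
  have hintexp : IntegrableOn (fun x : ℝ => Real.exp (-T * x)) (Ioi T) :=
    exp_neg_integrableOn_Ioi T hT0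
  have hint : IntegrableOn
      (fun x : ℝ => (Real.sqrt (2 * Real.pi))⁻¹ * (Real.exp (T ^ 2 / 2) * Real.exp (-T * x)))
      (Ioi T) := by
    exact ((hintexp.const_mul _).const_mul _)
  have hle : ∫ x in Ioi T, gauss x ≤
      ∫ x in Ioi T, (Real.sqrt (2 * Real.pi))⁻¹ * (Real.exp (T ^ 2 / 2) * Real.exp (-T * x)) := by
    apply setIntegral_mono_on integrable_gauss.integrableOn hint measurableSet_Ioi
    intro x _
    unfold gauss
    rw [← Real.exp_add]
    apply mul_le_mul_of_nonneg_left _ (by positivity)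
    apply Real.exp_le_exp.mpr
    nlinarith [sq_nonneg (x - T)]
  have hval : ∫ x in Ioi T, (Real.sqrt (2 * Real.pi))⁻¹ *
      (Real.exp (T ^ 2 / 2) * Real.exp (-T * x)) =
      (Real.sqrt (2 * Real.pi))⁻¹ * (Real.exp (T ^ 2 / 2) * (T⁻¹ * Real.exp (-(T * T)))) := by
    rw [integral_const_mul, integral_const_mul]
    congr 1
    congr 1
    have := integral_comp_mul_left_Ioi (fun y => Real.exp (-y)) T hT0
    simp only [smul_eq_mul] at this
    rw [show (fun x : ℝ => Real.exp (-T * x)) = fun x : ℝ => Real.exp (-(T * x)) by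
      funext x; ring_nf]
    rw [this, integral_exp_neg_Ioi]
  rw [hval] at hle
  refine hle.trans ?_
  have h1 : (Real.sqrt (2 * Real.pi))⁻¹ ≤ 1 := by
    rw [inv_le_one_iff₀]; right; exact sqrt_two_pi_ge_one
  have h2 : T⁻¹ ≤ 1 := by
    rw [inv_le_one_iff₀]; right; exact hT
  have h3 : Real.exp (T ^ 2 / 2) * Real.exp (-(T * T)) = Real.exp (-T ^ 2 / 2) := by
    rw [← Real.exp_add]; ring_nf
  calc (Real.sqrt (2 * Real.pi))⁻¹ * (Real.exp (T ^ 2 / 2) * (T⁻¹ * Real.exp (-(T * T))))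
      ≤ 1 * (Real.exp (T ^ 2 / 2) * (1 * Real.exp (-(T * T)))) := by
        apply mul_le_mul h1 _ (by positivity) (by norm_num)
        apply mul_le_mul_of_nonneg_left _ (by positivity)
        apply mul_le_mul_of_nonneg_right h2 (by positivity)
    _ = Real.exp (-T ^ 2 / 2) := by rw [one_mul, one_mul, h3]

lemma gauss_tail_left {T : ℝ} (hT : 1 ≤ T) :
    ∫ x in Iic (-T), gauss x ≤ Real.exp (-T ^ 2 / 2) := by
  have h := integral_comp_neg_Ioi T gauss
  simp only [gauss_neg] at h
  rw [← h]
  exact gauss_tail hT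

lemma gauss_tail_compl {T : ℝ} (hT : 1 ≤ T) :
    ∫ x in (Icc (-T) T)ᶜ, gauss x ≤ 2 * Real.exp (-T ^ 2 / 2) := by
  have hT0 : (0:ℝ) < T := lt_of_lt_of_le one_pos hT
  have hsub : (Icc (-T) T)ᶜ ⊆ Iic (-T) ∪ Ioi T := by
    intro x hx
    simp only [mem_compl_iff, mem_Icc, not_and_or, not_le] at hx
    rcases hx with h | h
    · left; exact le_of_lt h
    · right; exact h
  have hmono : ∫ x in (Icc (-T) T)ᶜ, gauss x ≤ ∫ x in Iic (-T) ∪ Ioi T, gauss x := by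
    apply setIntegral_mono_set integrable_gauss.integrableOn
      (Eventually.of_forall fun x => gauss_nonneg x) (HasSubset.Subset.eventuallyLE hsub)
  have hdisj : Disjoint (Iic (-T)) (Ioi T) := Iic_disjoint_Ioi (by linarith)
  have hunion : ∫ x in Iic (-T) ∪ Ioi T, gauss x =
      (∫ x in Iic (-T), gauss x) + ∫ x in Ioi T, gauss x :=
    setIntegral_union hdisj measurableSet_Ioi integrable_gauss.integrableOn
      integrable_gauss.integrableOn
  rw [hunion] at hmono
  have := gauss_tail hT
  have := gauss_tail_left hT
  linarith

/-- The real-valued `L^q(ℝ)` norm. -/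
def nrm (f : ℝ → ℝ) (q : ℝ≥0∞) : ℝ := (eLpNorm f q volume).toReal

lemma numeric1 {L T eps I : ℝ} (hL0 : 0 ≤ L) (hL2 : 0.693 ≤ L ^ 2)
    (hTL : T = Real.sqrt 2 * L) (heps : 0 < eps) (hI : I ≤ 4 * T * eps + 4 * eps) :
    I ≤ 16 * L * eps := by
  have hs2 : Real.sqrt 2 ≤ 1.5 := by
    nlinarith [Real.sq_sqrt (show (0:ℝ) ≤ 2 by norm_num), Real.sqrt_nonneg 2]
  have hs20 : 0 ≤ Real.sqrt 2 := Real.sqrt_nonneg 2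
  have hLlb : 0.4 ≤ L := by nlinarith
  have : 4 * T * eps + 4 * eps ≤ 16 * L * eps := by
    rw [hTL]
    nlinarith [mul_le_mul_of_nonneg_right hs2 (mul_nonneg hL0 heps.le),
      mul_le_mul_of_nonneg_right hLlb heps.le]
  linarith

/-- **Inequalities (2.27)–(2.28).** There is a universal constant `C > 0` such that for every
probability density `p` on `ℝ` with `0 < ‖p − φ‖_∞ ≤ 1/2`,
`‖p − φ‖₁ ≤ C √(|ln ‖p−φ‖_∞|) ‖p−φ‖_∞`, and consequently
`‖p − φ‖₂² ≤ ‖p−φ‖_∞ ‖p−φ‖₁ ≤ C √(|ln ‖p−φ‖_∞|) ‖p−φ‖_∞²`. -/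
theorem L1_le_of_Linf :
    ∃ C : ℝ, 0 < C ∧
      ∀ p : ℝ → ℝ, Measurable p → (∀ x, 0 ≤ p x) → (∫ x, p x) = 1 →
        0 < eLpNorm (fun x => p x - gauss x) ⊤ volume →
        eLpNorm (fun x => p x - gauss x) ⊤ volume ≤ 1 / 2 →
          nrm (fun x => p x - gauss x) 1 ≤
              C * Real.sqrt |Real.log (nrm (fun x => p x - gauss x) ⊤)| *
                nrm (fun x => p x - gauss x) ⊤ ∧
          (nrm (fun x => p x - gauss x) 2) ^ 2 ≤
              nrm (fun x => p x - gauss x) ⊤ * nrm (fun x => p x - gauss x) 1 ∧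
          nrm (fun x => p x - gauss x) ⊤ * nrm (fun x => p x - gauss x) 1 ≤
              C * Real.sqrt |Real.log (nrm (fun x => p x - gauss x) ⊤)| *
                (nrm (fun x => p x - gauss x) ⊤) ^ 2 := by
  refine ⟨16, by norm_num, fun p hp hp0 hp1 hpos hle => ?_⟩
  set f : ℝ → ℝ := fun x => p x - gauss x with hf
  -- basic integrability
  have hpi : Integrable p := by
    by_contra h
    rw [integral_undef h] at hp1
    norm_num at hp1
  have hfi : Integrable f := hpi.sub integrable_gauss
  have hfabs : Integrable (fun x => |f x|) := hfi.abs
  -- ε and its properties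
  set ε : ℝ := nrm f ⊤ with hεdef
  have hεtop : eLpNorm f ⊤ volume ≠ ∞ := (lt_of_le_of_lt hle (by norm_num)).ne
  have hε0 : 0 < ε := ENNReal.toReal_pos hpos.ne' hεtop
  have hehalf : ε ≤ 1 / 2 := by
    have := ENNReal.toReal_mono (by norm_num) hle
    simpa [hεdef, nrm] using this
  -- a.e. bound
  have hae : ∀ᵐ x, |f x| ≤ ε := by
    filter_upwards [enorm_ae_le_eLpNormEssSup f volume] with x hx
    have h2 : (‖f x‖₊ : ℝ≥0∞) ≤ eLpNorm f ⊤ volume := by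
      rwa [eLpNorm_exponent_top]
    have := ENNReal.toReal_mono hεtop h2
    simpa [Real.norm_eq_abs, hεdef, nrm] using this
  -- the threshold T
  set T : ℝ := Real.sqrt (2 * |Real.log ε|) with hTdef
  have hlogneg : Real.log ε < 0 := Real.log_neg hε0 (by linarith)
  have habs : |Real.log ε| = -Real.log ε := abs_of_neg hlogneg
  have hlog2 : Real.log 2 ≤ |Real.log ε| := by
    rw [habs]
    have : Real.log ε ≤ Real.log (1/2) := Real.log_le_log hε0 hehalf
    rw [show (1/2 : ℝ) = 2⁻¹ by norm_num, Real.log_inv] at this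
    linarith
  have hlog2pos : (0.693 : ℝ) < Real.log 2 := by
    have := Real.log_two_gt_d9; linarith
  have hT2 : T ^ 2 = 2 * |Real.log ε| := Real.sq_sqrt (by positivity)
  have hT1 : 1 ≤ T := by
    rw [show (1:ℝ) = Real.sqrt 1 by simp]
    apply Real.sqrt_le_sqrt
    nlinarith
  have hT0 : (0:ℝ) < T := lt_of_lt_of_le one_pos hT1
  have hexpT : Real.exp (-T ^ 2 / 2) = ε := by
    rw [hT2, habs]
    rw [show -(2 * -Real.log ε) / 2 = Real.log ε by ring]
    exact Real.exp_log hε0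
  -- the set S
  set S : Set ℝ := Icc (-T) T with hSdef
  have hS : MeasurableSet S := measurableSet_Icc
  have hvolS : volume S = ENNReal.ofReal (2 * T) := by
    rw [hSdef, Real.volume_Icc]; congr 1; ring
  have hvolSfin : volume S < ∞ := by rw [hvolS]; exact ENNReal.ofReal_lt_top
  have hvolStoReal : (volume S).toReal = 2 * T := by
    rw [hvolS, ENNReal.toReal_ofReal (by positivity)]
  have hconstS : IntegrableOn (fun _ : ℝ => ε) S := integrableOn_const hvolSfin.ne (by simp)
  -- Step A
  have hA : ∫ x in S, |f x| ≤ ε * (2 * T) := by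
    have h1 : ∫ x in S, |f x| ≤ ∫ x in S, ε :=
      integral_mono_ae hfabs.integrableOn hconstS (ae_restrict_of_ae hae)
    have h2 : ∫ _ in S, (ε : ℝ) = (volume S).toReal • ε := setIntegral_const ε
    rw [h2, hvolStoReal, smul_eq_mul] at h1
    linarith
  -- Step B
  have hpg : Integrable (fun x => p x + gauss x) := hpi.add integrable_gauss
  have hB : ∫ x in Sᶜ, |f x| ≤ ∫ x in Sᶜ, (p x + gauss x) := by
    apply integral_mono_ae hfabs.integrableOn hpg.integrableOn
    apply ae_restrict_of_ae
    filter_upwards with x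
    have h1 := hp0 x
    have h2 := gauss_nonneg x
    rw [hf]
    rw [abs_le]
    constructor <;> [skip; skip] <;> simp only <;> nlinarith
  -- Step C : split the total mass
  have hC : (∫ x in S, (p x + gauss x)) + ∫ x in Sᶜ, (p x + gauss x) = 2 := by
    rw [integral_add_compl hS hpg, integral_add hpi integrable_gauss, hp1, integral_gauss]
    norm_num
  -- Step D : lower bound on S
  have hgε : Integrable (fun x => 2 * gauss x - ε) (volume.restrict S) := by
    exact ((integrable_gauss.const_mul 2).integrableOn).sub hconstS
  have hD : 2 * (∫ x in S, gauss x) - ε * (2 * T) ≤ ∫ x in S, (p x + gauss x) := by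
    have h1 : ∫ x in S, (2 * gauss x - ε) ≤ ∫ x in S, (p x + gauss x) := by
      apply integral_mono_ae hgε hpg.integrableOn
      apply ae_restrict_of_ae
      filter_upwards [hae] with x hx
      have := abs_le.mp hx
      simp only [hf] at this
      nlinarith [this.1]
    have h2 : ∫ x in S, (2 * gauss x - ε) = 2 * (∫ x in S, gauss x) - ε * (2 * T) := by
      rw [integral_sub ((integrable_gauss.const_mul 2).integrableOn) hconstS,
        integral_const_mul, setIntegral_const, measureReal_def, hvolStoReal, smul_eq_mul]
      ring
    linarith
  -- Step E : tail of gauss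
  have hE0 : (∫ x in S, gauss x) + ∫ x in Sᶜ, gauss x = 1 := by
    rw [integral_add_compl hS integrable_gauss, integral_gauss]
  have hE : ∫ x in Sᶜ, gauss x ≤ 2 * ε := by
    have := gauss_tail_compl hT1
    rw [hexpT] at this
    exact this
  -- combine
  have htot : (∫ x in S, |f x|) + ∫ x in Sᶜ, |f x| = ∫ x, |f x| :=
    integral_add_compl hS hfabs
  have hI : ∫ x, |f x| ≤ 4 * T * ε + 4 * ε := by nlinarith
  -- identify nrm f 1
  have hnrm1 : nrm f 1 = ∫ x, |f x| := by
    rw [nrm, eLpNorm_one_eq_lintegral_enorm,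
      ← ofReal_integral_norm_eq_lintegral_enorm hfi,
      ENNReal.toReal_ofReal (integral_nonneg fun x => norm_nonneg _)]
    simp [Real.norm_eq_abs]
  -- final numeric bound for part 1
  set L : ℝ := Real.sqrt |Real.log ε| with hLdef
  have hL0 : 0 ≤ L := Real.sqrt_nonneg _
  have hL2 : L ^ 2 = |Real.log ε| := Real.sq_sqrt (abs_nonneg _)
  have hTL : T = Real.sqrt 2 * L := by
    rw [hTdef, hLdef, Real.sqrt_mul (by norm_num)]
  have hpart1 : nrm f 1 ≤ 16 * L * ε := by
    rw [hnrm1]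
    exact numeric1 hL0 (by rw [hL2]; linarith) hTL hε0 hI
  -- part 2 : L2 interpolation
  have hf1top : eLpNorm f 1 volume ≠ ∞ :=
    ((memLp_one_iff_integrable.mpr hfi).eLpNorm_lt_top).ne
  have hfm : Measurable f := hp.sub measurable_gauss
  have hkey : (eLpNorm f 2 volume) ^ 2 ≤ eLpNorm f ⊤ volume * eLpNorm f 1 volume := by
    have harg : (∫⁻ x, (‖f x‖₊ : ℝ≥0∞) ^ (2:ℕ)) ≤ eLpNormEssSup f volume * eLpNorm f 1 volume := by
      rw [← eLpNorm_exponent_top (f := f) (μ := volume)]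
      calc (∫⁻ x, (‖f x‖₊ : ℝ≥0∞) ^ (2:ℕ))
          ≤ ∫⁻ x, eLpNorm f ⊤ volume * (‖f x‖₊ : ℝ≥0∞) := by
            apply lintegral_mono_ae
            filter_upwards [enorm_ae_le_eLpNormEssSup f volume] with x hx
            rw [sq]
            apply mul_le_mul_left
            rwa [eLpNorm_exponent_top]
        _ = eLpNorm f ⊤ volume * ∫⁻ x, (‖f x‖₊ : ℝ≥0∞) := lintegral_const_mul' _ _ hεtop
        _ = eLpNorm f ⊤ volume * eLpNorm f 1 volume := by
            rw [eLpNorm_one_eq_lintegral_enorm]; rfl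
    have h2 : eLpNorm f 2 volume = (∫⁻ x, (‖f x‖₊ : ℝ≥0∞) ^ (2:ℕ)) ^ ((1:ℝ)/2) := by
      rw [eLpNorm_eq_lintegral_rpow_enorm_toReal (by norm_num) (by norm_num)]
      rw [show ((2:ℝ≥0∞)).toReal = ((2:ℕ):ℝ) by norm_num]
      simp_rw [ENNReal.rpow_natCast]
      norm_num
      rfl
    rw [h2, ← ENNReal.rpow_natCast _ 2, ← ENNReal.rpow_mul]
    norm_num
    exact harg
  have hpart2 : (nrm f 2) ^ 2 ≤ nrm f ⊤ * nrm f 1 := by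
    rw [nrm, nrm, nrm, ← ENNReal.toReal_pow, ← ENNReal.toReal_mul]
    exact ENNReal.toReal_mono (ENNReal.mul_ne_top hεtop hf1top) hkey
  refine ⟨hpart1, hpart2, ?_⟩
  calc nrm f ⊤ * nrm f 1 ≤ ε * (16 * L * ε) := by
        apply mul_le_mul_of_nonneg_left hpart1 hε0.le
    _ = 16 * L * ε ^ 2 := by ring
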